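/- Let m > 3 be an odd integer, G = ℤ_{2m}, H = {0, m}, and for 1 ≤ i ≤ 2m−1 let S_i = {i, m−i, m+i, 2m−i} ⊆ ℤ_{2m}. Then: (a) each S_i with 1 ≤ i ≤ (m−1)/2 has exactly 4 elements and the sets S₁, …, S_{(m−1)/2} partition G∖H; (b) for 1 ≤ i ≤ (m−1)/2, the multiset Δ(S_i) equals 4 copies of {m} together with 2 copies of the set S_{2i}; (c) for 1 ≤ i ≠ j ≤ (m−1)/2, the multiset Δ(S_i, S_j) equals 2 copies of the set S_{i−j} together with 2 copies of the set S_{i+j} (indices taken modulo 2m, and noting S_i = S_{m−i} = S_{m+i} = S_{2m−i}). -/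
import Mathlib


open Finset

/-- The multiset of internal differences of a finite subset of an additive group. -/
def dInt {G : Type*} [AddGroup G] [DecidableEq G] (D : Finset G) : Multiset G :=
  ((D ×ˢ D).filter fun p => p.1 ≠ p.2).val.map fun p => p.1 - p.2

/-- The multiset of external differences between two finite subsets of an additive group. -/
def dExt {G : Type*} [AddGroup G] (D₁ D₂ : Finset G) : Multiset G :=
  (D₁ ×ˢ D₂).val.map fun p => p.1 - p.2

/-- The multiset union of the internal differences of a family of sets. -/
def IntFam {G : Type*} [AddGroup G] [DecidableEq G] {ι : Type*} [Fintype ι]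
    (A : ι → Finset G) : Multiset G :=
  ∑ i, dInt (A i)

/-- The multiset union of external differences over ordered pairs of distinct sets. -/
def ExtFam {G : Type*} [AddGroup G] [DecidableEq G] {ι : Type*} [Fintype ι] [DecidableEq ι]
    (A : ι → Finset G) : Multiset G :=
  ∑ i, ∑ j ∈ Finset.univ.erase i, dExt (A i) (A j)

/-- A `(v,s,k,lam,mu)`-disjoint partial difference family in the additive group `G`. -/
def IsDPDF (G : Type*) [AddGroup G] [Fintype G] [DecidableEq G] {ι : Type*} [Fintype ι]
    (v s k lam mu : ℕ) (A : ι → Finset G) : Prop :=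
  Fintype.card G = v ∧ Fintype.card ι = s ∧
  (∀ i, (A i).card = k) ∧ (∀ i, (0 : G) ∉ A i) ∧
  (∀ i j, i ≠ j → Disjoint (A i) (A j)) ∧
  (∀ g : G, g ≠ 0 → (∃ i, g ∈ A i) → (IntFam A).count g = lam) ∧
  (∀ g : G, g ≠ 0 → (∀ i, g ∉ A i) → (IntFam A).count g = mu)

/-- A `(v,s,k,lam,mu)`-external partial difference family in the additive group `G`. -/
def IsEPDF (G : Type*) [AddGroup G] [Fintype G] [DecidableEq G] {ι : Type*} [Fintype ι]
    [DecidableEq ι] (v s k lam mu : ℕ) (A : ι → Finset G) : Prop :=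
  Fintype.card G = v ∧ Fintype.card ι = s ∧
  (∀ i, (A i).card = k) ∧ (∀ i, (0 : G) ∉ A i) ∧
  (∀ i j, i ≠ j → Disjoint (A i) (A j)) ∧
  (∀ g : G, g ≠ 0 → (∃ i, g ∈ A i) → (ExtFam A).count g = lam) ∧
  (∀ g : G, g ≠ 0 → (∀ i, g ∉ A i) → (ExtFam A).count g = mu)

/-- The set `S_x = {x, m−x, m+x, 2m−x}` in `ℤ_{2m}` (note `2m−x = −x`). -/
def Sfam (m : ℕ) (x : ZMod (2 * m)) : Finset (ZMod (2 * m)) :=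
  {x, (m : ZMod (2 * m)) - x, (m : ZMod (2 * m)) + x, -x}

section AuxQuad
variable {G : Type*} [AddGroup G] [DecidableEq G]

omit [AddGroup G] in
theorem quad_val (a b c d : G)
    (hab : a ≠ b) (hac : a ≠ c) (had : a ≠ d) (hbc : b ≠ c) (hbd : b ≠ d) (hcd : c ≠ d) :
    ({a,b,c,d} : Finset G).val = a ::ₘ b ::ₘ c ::ₘ {d} := by
  simp [Finset.insert_val_of_notMem, hab, hac, had, hbc, hbd, hcd]

omit [AddGroup G] in
theorem card_quad (a b c d : G)
    (hab : a ≠ b) (hac : a ≠ c) (had : a ≠ d) (hbc : b ≠ c) (hbd : b ≠ d) (hcd : c ≠ d) :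
    ({a,b,c,d} : Finset G).card = 4 := by
  rw [Finset.card_def, quad_val a b c d hab hac had hbc hbd hcd]; rfl

set_option maxHeartbeats 1000000 in
theorem dInt_quad (a b c d : G)
    (hab : a ≠ b) (hac : a ≠ c) (had : a ≠ d) (hbc : b ≠ c) (hbd : b ≠ d) (hcd : c ≠ d) :
    dInt ({a,b,c,d} : Finset G) =
      ↑[a-b,a-c,a-d,b-a,b-c,b-d,c-a,c-b,c-d,d-a,d-b,d-c] := by
  simp only [dInt, Finset.filter_val, Finset.product_val, quad_val a b c d hab hac had hbc hbd hcd]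
  simp only [Multiset.cons_product, Multiset.product_cons, Multiset.zero_product,
    Multiset.product_zero, Multiset.map_cons, Multiset.map_singleton, Multiset.filter_add,
    Multiset.filter_cons, Multiset.filter_singleton, Multiset.map_add]
  simp [hab, hac, had, hbc, hbd, hcd, hab.symm, hac.symm, had.symm, hbc.symm, hbd.symm, hcd.symm,
    Multiset.filter_cons, Multiset.filter_singleton]
  simp only [← Multiset.singleton_add, ← Multiset.cons_coe, Multiset.coe_nil]
  abel

set_option maxHeartbeats 1000000 in
theorem dExt_quad (a b c d e f g h : G)
    (hab : a ≠ b) (hac : a ≠ c) (had : a ≠ d) (hbc : b ≠ c) (hbd : b ≠ d) (hcd : c ≠ d)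
    (hef : e ≠ f) (heg : e ≠ g) (heh : e ≠ h) (hfg : f ≠ g) (hfh : f ≠ h) (hgh : g ≠ h) :
    dExt ({a,b,c,d} : Finset G) ({e,f,g,h} : Finset G) =
      ↑[a-e,a-f,a-g,a-h,b-e,b-f,b-g,b-h,c-e,c-f,c-g,c-h,d-e,d-f,d-g,d-h] := by
  simp [dExt, Finset.product_val, Finset.insert_val_of_notMem, hab, hac, had, hbc, hbd, hcd,
    hef, heg, heh, hfg, hfh, hgh]
  simp only [← Multiset.singleton_add, ← Multiset.cons_coe, Multiset.coe_nil]
  abel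

end AuxQuad

theorem Sfam_pairwise (m : ℕ) (x : ZMod (2*m)) (hm0 : (m : ZMod (2*m)) ≠ 0)
    (hmm : (m : ZMod (2*m)) + (m : ZMod (2*m)) = 0) (h0 : x + x ≠ 0)
    (hM : x + x ≠ (m : ZMod (2*m))) :
    x ≠ (m : ZMod (2*m)) - x ∧ x ≠ (m : ZMod (2*m)) + x ∧ x ≠ -x ∧
    ((m : ZMod (2*m)) - x ≠ (m : ZMod (2*m)) + x) ∧ ((m : ZMod (2*m)) - x ≠ -x) ∧
    ((m : ZMod (2*m)) + x ≠ -x) :=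
  ⟨fun h => hM (by linear_combination h), fun h => hm0 (by linear_combination -h),
    fun h => h0 (by linear_combination h), fun h => h0 (by linear_combination -h),
    fun h => hm0 (by linear_combination h), fun h => hM (by linear_combination h - hmm)⟩

theorem Sfam_val (m : ℕ) (x : ZMod (2*m)) (hm0 : (m : ZMod (2*m)) ≠ 0)
    (hmm : (m : ZMod (2*m)) + (m : ZMod (2*m)) = 0) (h0 : x + x ≠ 0)
    (hM : x + x ≠ (m : ZMod (2*m))) :
    (Sfam m x).val = x ::ₘ ((m : ZMod (2*m)) - x) ::ₘ ((m : ZMod (2*m)) + x) ::ₘ {-x} := by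
  obtain ⟨h1,h2,h3,h4,h5,h6⟩ := Sfam_pairwise m x hm0 hmm h0 hM
  simp only [Sfam]
  exact quad_val _ _ _ _ h1 h2 h3 h4 h5 h6


set_option maxHeartbeats 2000000 in
/-- for odd `m > 3`, in `G = ℤ_{2m}` with `H = {0, m}` and
`S_i = {i, m−i, m+i, 2m−i}`: (a) each `S_i` (`1 ≤ i ≤ (m−1)/2`) has 4 elements and
`S_1, …, S_{(m−1)/2}` partition `G∖H`; (b) `Δ(S_i) = 4·{m} ∪ 2·S_{2i}`;
(c) for `i ≠ j`, `Δ(S_i, S_j) = 2·S_{i−j} ∪ 2·S_{i+j}` (indices mod `2m`). -/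
theorem Sfam_properties (m : ℕ) (hm : 3 < m) (hodd : Odd m) :
    (∀ i : ℕ, 1 ≤ i → i ≤ (m - 1) / 2 → (Sfam m (i : ZMod (2 * m))).card = 4) ∧
    (∀ i j : ℕ, 1 ≤ i → i ≤ (m - 1) / 2 → 1 ≤ j → j ≤ (m - 1) / 2 → i ≠ j →
      Disjoint (Sfam m (i : ZMod (2 * m))) (Sfam m (j : ZMod (2 * m)))) ∧
    (∀ x : ZMod (2 * m), (x ≠ 0 ∧ x ≠ (m : ZMod (2 * m))) ↔
      ∃ i : ℕ, 1 ≤ i ∧ i ≤ (m - 1) / 2 ∧ x ∈ Sfam m (i : ZMod (2 * m))) ∧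
    (∀ i : ℕ, 1 ≤ i → i ≤ (m - 1) / 2 →
      dInt (Sfam m (i : ZMod (2 * m))) =
        Multiset.replicate 4 ((m : ZMod (2 * m))) + 2 • (Sfam m ((2 * i : ℕ) : ZMod (2 * m))).val) ∧
    (∀ i j : ℕ, 1 ≤ i → i ≤ (m - 1) / 2 → 1 ≤ j → j ≤ (m - 1) / 2 → i ≠ j →
      dExt (Sfam m (i : ZMod (2 * m))) (Sfam m (j : ZMod (2 * m))) =
        2 • (Sfam m ((i : ZMod (2 * m)) - (j : ZMod (2 * m)))).val +
        2 • (Sfam m ((i : ZMod (2 * m)) + (j : ZMod (2 * m)))).val) := by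
  obtain ⟨r, hr⟩ := hodd
  haveI : NeZero (2*m) := ⟨by omega⟩
  have hinj : ∀ a b : ℕ, a < 2*m → b < 2*m →
      (((a : ℕ) : ZMod (2*m)) = ((b : ℕ) : ZMod (2*m)) ↔ a = b) := by
    intro a b ha hb
    rw [ZMod.natCast_eq_natCast_iff]
    unfold Nat.ModEq
    rw [Nat.mod_eq_of_lt ha, Nat.mod_eq_of_lt hb]
  have hm0 : (m : ZMod (2*m)) ≠ 0 := by
    intro h
    rw [show (0 : ZMod (2*m)) = ((0:ℕ) : ZMod (2*m)) from by norm_num,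
      hinj m 0 (by omega) (by omega)] at h
    omega
  have hmm : (m : ZMod (2*m)) + (m : ZMod (2*m)) = 0 := by
    have h2m := ZMod.natCast_self (2*m)
    push_cast at h2m
    linear_combination h2m
  have hrepr : ∀ l : ℕ, l ≤ m → Sfam m (l : ZMod (2*m)) =
      ({((l:ℕ) : ZMod (2*m)), (((m-l) : ℕ) : ZMod (2*m)), (((m+l) : ℕ) : ZMod (2*m)),
        (((2*m-l) : ℕ) : ZMod (2*m))} : Finset (ZMod (2*m))) := by
    intro l hl
    have e1 : (m : ZMod (2*m)) - (l : ZMod (2*m)) = ((m - l : ℕ) : ZMod (2*m)) :=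
      (Nat.cast_sub hl).symm
    have e2 : (m : ZMod (2*m)) + (l : ZMod (2*m)) = ((m + l : ℕ) : ZMod (2*m)) := by push_cast; ring
    have e3 : -(l : ZMod (2*m)) = ((2*m - l : ℕ) : ZMod (2*m)) := by
      rw [Nat.cast_sub (by omega), ZMod.natCast_self, zero_sub]
    simp only [Sfam]
    rw [e1, e2, e3]
  have hne0m : ∀ a : ℕ, a < 2*m → a ≠ 0 → a ≠ m →
      ((a : ZMod (2*m)) ≠ 0 ∧ (a : ZMod (2*m)) ≠ (m : ZMod (2*m))) := by
    intro a ha h0 hm'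
    constructor
    · intro h
      rw [show (0 : ZMod (2*m)) = ((0:ℕ) : ZMod (2*m)) from by norm_num,
        hinj a 0 ha (by omega)] at h
      exact h0 h
    · intro h
      rw [hinj a m ha (by omega)] at h
      exact hm' h
  refine ⟨?_, ?_, ?_, ?_, ?_⟩
  · -- card
    intro i hi1 hik
    rw [hrepr i (by omega)]
    refine card_quad _ _ _ _ ?_ ?_ ?_ ?_ ?_ ?_ <;>
      rw [Ne, hinj _ _ (by omega) (by omega)] <;> omega
  · -- disjoint
    intro i j hi1 hik hj1 hjk hij
    rw [hrepr i (by omega), hrepr j (by omega), Finset.disjoint_left]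
    intro x hx hy
    simp only [mem_insert, mem_singleton] at hx hy
    rcases hx with rfl|rfl|rfl|rfl <;> rcases hy with h|h|h|h <;>
      rw [hinj _ _ (by omega) (by omega)] at h <;> omega
  · -- partition iff
    intro x
    constructor
    · rintro ⟨hx0, hxm⟩
      obtain ⟨v, hvlt, rfl⟩ : ∃ v : ℕ, v < 2*m ∧ ((v : ℕ) : ZMod (2*m)) = x :=
        ⟨x.val, ZMod.val_lt x, ZMod.natCast_rightInverse x⟩
      have hv0 : v ≠ 0 := by rintro rfl; exact hx0 (by norm_num)
      have hvm : v ≠ m := by rintro rfl; exact hxm rfl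
      rcases (show (1 ≤ v ∧ v ≤ r) ∨ (r < v ∧ v < m) ∨
          (m < v ∧ v ≤ m + r) ∨ (m + r < v ∧ v < 2*m) from by omega) with
        ⟨h1,h2⟩|⟨h1,h2⟩|⟨h1,h2⟩|⟨h1,h2⟩
      · exact ⟨v, h1, by omega,
          by simp [Sfam]⟩
      · refine ⟨m - v, by omega, by omega, ?_⟩
        simp only [Sfam, mem_insert, mem_singleton]
        right; left
        rw [Nat.cast_sub (show v ≤ m by omega)]
        ring
      · refine ⟨v - m, by omega, by omega, ?_⟩
        simp only [Sfam, mem_insert, mem_singleton]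
        right; right; left
        rw [Nat.cast_sub (show m ≤ v by omega)]
        ring
      · refine ⟨2*m - v, by omega, by omega, ?_⟩
        simp only [Sfam, mem_insert, mem_singleton]
        right; right; right
        rw [Nat.cast_sub (show v ≤ 2*m by omega)]
        have h2m := ZMod.natCast_self (2*m)
        push_cast at h2m ⊢
        linear_combination h2m
    · rintro ⟨i, hi1, hik, hmem⟩
      rw [hrepr i (by omega)] at hmem
      simp only [mem_insert, mem_singleton] at hmem
      rcases hmem with rfl|rfl|rfl|rfl <;> exact hne0m _ (by omega) (by omega) (by omega)
  · -- dInt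
    intro i hi1 hik
    have h2i : ((2*i : ℕ) : ZMod (2*m)) = (i : ZMod (2*m)) + (i : ZMod (2*m)) := by
      push_cast; ring
    have c1 : (i : ZMod (2*m)) + (i : ZMod (2*m)) ≠ 0 := by
      intro h
      have h' : ((2*i : ℕ) : ZMod (2*m)) = ((0:ℕ) : ZMod (2*m)) := by push_cast; linear_combination h
      rw [hinj _ _ (by omega) (by omega)] at h'; omega
    have c2 : (i : ZMod (2*m)) + (i : ZMod (2*m)) ≠ (m : ZMod (2*m)) := by
      intro h
      have h' : ((2*i : ℕ) : ZMod (2*m)) = ((m:ℕ) : ZMod (2*m)) := by push_cast; linear_combination h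
      rw [hinj _ _ (by omega) (by omega)] at h'; omega
    have c3 : ((2*i : ℕ) : ZMod (2*m)) + ((2*i : ℕ) : ZMod (2*m)) ≠ 0 := by
      intro h
      rw [h2i] at h
      have h' : ((4*i : ℕ) : ZMod (2*m)) = ((0:ℕ) : ZMod (2*m)) := by push_cast; linear_combination h
      rw [hinj _ _ (by omega) (by omega)] at h'; omega
    have c4 : ((2*i : ℕ) : ZMod (2*m)) + ((2*i : ℕ) : ZMod (2*m)) ≠ (m : ZMod (2*m)) := by
      intro h
      rw [h2i] at h
      have h' : ((4*i : ℕ) : ZMod (2*m)) = ((m:ℕ) : ZMod (2*m)) := by push_cast; linear_combination h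
      rw [hinj _ _ (by omega) (by omega)] at h'; omega
    obtain ⟨p1,p2,p3,p4,p5,p6⟩ := Sfam_pairwise m (i : ZMod (2*m)) hm0 hmm c1 c2
    have hL : dInt (Sfam m (i : ZMod (2*m))) =
        ↑[(i : ZMod (2*m)) - ((m : ZMod (2*m)) - i), (i : ZMod (2*m)) - ((m : ZMod (2*m)) + i),
          (i : ZMod (2*m)) - -(i : ZMod (2*m)),
          (m : ZMod (2*m)) - i - i, (m : ZMod (2*m)) - i - ((m : ZMod (2*m)) + i),
          (m : ZMod (2*m)) - i - -(i : ZMod (2*m)),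
          (m : ZMod (2*m)) + i - i, (m : ZMod (2*m)) + i - ((m : ZMod (2*m)) - i),
          (m : ZMod (2*m)) + i - -(i : ZMod (2*m)),
          -(i : ZMod (2*m)) - i, -(i : ZMod (2*m)) - ((m : ZMod (2*m)) - i),
          -(i : ZMod (2*m)) - ((m : ZMod (2*m)) + i)] := by
      simp only [Sfam]
      exact dInt_quad _ _ _ _ p1 p2 p3 p4 p5 p6
    rw [hL, Sfam_val m ((2*i : ℕ) : ZMod (2*m)) hm0 hmm c3 c4]
    rw [show (i : ZMod (2*m)) - ((m : ZMod (2*m)) - i) = (m : ZMod (2*m)) + ((2*i : ℕ) : ZMod (2*m))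
          from by linear_combination -h2i - hmm,
        show (i : ZMod (2*m)) - ((m : ZMod (2*m)) + i) = (m : ZMod (2*m)) from by
          linear_combination -hmm,
        show (i : ZMod (2*m)) - -(i : ZMod (2*m)) = ((2*i : ℕ) : ZMod (2*m)) from by
          linear_combination -h2i,
        show (m : ZMod (2*m)) - i - i = (m : ZMod (2*m)) - ((2*i : ℕ) : ZMod (2*m)) from by
          linear_combination h2i,
        show (m : ZMod (2*m)) - i - ((m : ZMod (2*m)) + i) = -((2*i : ℕ) : ZMod (2*m)) from by
          linear_combination h2i,
        show (m : ZMod (2*m)) - i - -(i : ZMod (2*m)) = (m : ZMod (2*m)) from by ring,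
        show (m : ZMod (2*m)) + i - i = (m : ZMod (2*m)) from by ring,
        show (m : ZMod (2*m)) + i - ((m : ZMod (2*m)) - i) = ((2*i : ℕ) : ZMod (2*m)) from by
          linear_combination -h2i,
        show (m : ZMod (2*m)) + i - -(i : ZMod (2*m)) = (m : ZMod (2*m)) + ((2*i : ℕ) : ZMod (2*m))
          from by linear_combination -h2i,
        show -(i : ZMod (2*m)) - i = -((2*i : ℕ) : ZMod (2*m)) from by linear_combination h2i,
        show -(i : ZMod (2*m)) - ((m : ZMod (2*m)) - i) = (m : ZMod (2*m)) from by
          linear_combination -hmm,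
        show -(i : ZMod (2*m)) - ((m : ZMod (2*m)) + i) = (m : ZMod (2*m)) - ((2*i : ℕ) : ZMod (2*m))
          from by linear_combination h2i - hmm]
    rw [two_nsmul]
    simp only [Multiset.replicate_succ, Multiset.replicate_zero, ← Multiset.singleton_add,
      ← Multiset.cons_coe, Multiset.coe_nil]
    abel
  · -- dExt
    intro i j hi1 hik hj1 hjk hij
    have ci1 : (i : ZMod (2*m)) + (i : ZMod (2*m)) ≠ 0 := by
      intro h
      have h' : ((2*i : ℕ) : ZMod (2*m)) = ((0:ℕ) : ZMod (2*m)) := by push_cast; linear_combination h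
      rw [hinj _ _ (by omega) (by omega)] at h'; omega
    have ci2 : (i : ZMod (2*m)) + (i : ZMod (2*m)) ≠ (m : ZMod (2*m)) := by
      intro h
      have h' : ((2*i : ℕ) : ZMod (2*m)) = ((m:ℕ) : ZMod (2*m)) := by push_cast; linear_combination h
      rw [hinj _ _ (by omega) (by omega)] at h'; omega
    have cj1 : (j : ZMod (2*m)) + (j : ZMod (2*m)) ≠ 0 := by
      intro h
      have h' : ((2*j : ℕ) : ZMod (2*m)) = ((0:ℕ) : ZMod (2*m)) := by push_cast; linear_combination h
      rw [hinj _ _ (by omega) (by omega)] at h'; omega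
    have cj2 : (j : ZMod (2*m)) + (j : ZMod (2*m)) ≠ (m : ZMod (2*m)) := by
      intro h
      have h' : ((2*j : ℕ) : ZMod (2*m)) = ((m:ℕ) : ZMod (2*m)) := by push_cast; linear_combination h
      rw [hinj _ _ (by omega) (by omega)] at h'; omega
    have cd1 : ((i : ZMod (2*m)) - j) + ((i : ZMod (2*m)) - j) ≠ 0 := by
      intro h
      have h' : ((2*i : ℕ) : ZMod (2*m)) = ((2*j:ℕ) : ZMod (2*m)) := by push_cast; linear_combination h
      rw [hinj _ _ (by omega) (by omega)] at h'; omega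
    have cd2 : ((i : ZMod (2*m)) - j) + ((i : ZMod (2*m)) - j) ≠ (m : ZMod (2*m)) := by
      intro h
      have h' : ((2*i : ℕ) : ZMod (2*m)) = ((m + 2*j : ℕ) : ZMod (2*m)) := by
        push_cast; linear_combination h
      rw [hinj _ _ (by omega) (by omega)] at h'; omega
    have cs1 : ((i : ZMod (2*m)) + j) + ((i : ZMod (2*m)) + j) ≠ 0 := by
      intro h
      have h' : ((2*i + 2*j : ℕ) : ZMod (2*m)) = ((0:ℕ) : ZMod (2*m)) := by
        push_cast; linear_combination h
      rw [hinj _ _ (by omega) (by omega)] at h'; omega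
    have cs2 : ((i : ZMod (2*m)) + j) + ((i : ZMod (2*m)) + j) ≠ (m : ZMod (2*m)) := by
      intro h
      have h' : ((2*i + 2*j : ℕ) : ZMod (2*m)) = ((m:ℕ) : ZMod (2*m)) := by
        push_cast; linear_combination h
      rw [hinj _ _ (by omega) (by omega)] at h'; omega
    obtain ⟨p1,p2,p3,p4,p5,p6⟩ := Sfam_pairwise m (i : ZMod (2*m)) hm0 hmm ci1 ci2
    obtain ⟨q1,q2,q3,q4,q5,q6⟩ := Sfam_pairwise m (j : ZMod (2*m)) hm0 hmm cj1 cj2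
    have hL : dExt (Sfam m (i : ZMod (2*m))) (Sfam m (j : ZMod (2*m))) =
        ↑[(i : ZMod (2*m)) - j, (i : ZMod (2*m)) - ((m : ZMod (2*m)) - j),
          (i : ZMod (2*m)) - ((m : ZMod (2*m)) + j), (i : ZMod (2*m)) - -(j : ZMod (2*m)),
          (m : ZMod (2*m)) - i - j, (m : ZMod (2*m)) - i - ((m : ZMod (2*m)) - j),
          (m : ZMod (2*m)) - i - ((m : ZMod (2*m)) + j), (m : ZMod (2*m)) - i - -(j : ZMod (2*m)),
          (m : ZMod (2*m)) + i - j, (m : ZMod (2*m)) + i - ((m : ZMod (2*m)) - j),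
          (m : ZMod (2*m)) + i - ((m : ZMod (2*m)) + j), (m : ZMod (2*m)) + i - -(j : ZMod (2*m)),
          -(i : ZMod (2*m)) - j, -(i : ZMod (2*m)) - ((m : ZMod (2*m)) - j),
          -(i : ZMod (2*m)) - ((m : ZMod (2*m)) + j), -(i : ZMod (2*m)) - -(j : ZMod (2*m))] := by
      simp only [Sfam]
      exact dExt_quad _ _ _ _ _ _ _ _ p1 p2 p3 p4 p5 p6 q1 q2 q3 q4 q5 q6
    rw [hL, Sfam_val m ((i : ZMod (2*m)) - j) hm0 hmm cd1 cd2,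
      Sfam_val m ((i : ZMod (2*m)) + j) hm0 hmm cs1 cs2]
    rw [show (i : ZMod (2*m)) - ((m : ZMod (2*m)) - j) =
          (m : ZMod (2*m)) + ((i : ZMod (2*m)) + j) from by linear_combination -hmm,
        show (i : ZMod (2*m)) - ((m : ZMod (2*m)) + j) =
          (m : ZMod (2*m)) + ((i : ZMod (2*m)) - j) from by linear_combination -hmm,
        show (i : ZMod (2*m)) - -(j : ZMod (2*m)) = (i : ZMod (2*m)) + j from by ring,
        show (m : ZMod (2*m)) - i - j = (m : ZMod (2*m)) - ((i : ZMod (2*m)) + j) from by ring,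
        show (m : ZMod (2*m)) - i - ((m : ZMod (2*m)) - j) = -((i : ZMod (2*m)) - j) from by ring,
        show (m : ZMod (2*m)) - i - ((m : ZMod (2*m)) + j) = -((i : ZMod (2*m)) + j) from by ring,
        show (m : ZMod (2*m)) - i - -(j : ZMod (2*m)) =
          (m : ZMod (2*m)) - ((i : ZMod (2*m)) - j) from by ring,
        show (m : ZMod (2*m)) + i - j = (m : ZMod (2*m)) + ((i : ZMod (2*m)) - j) from by ring,
        show (m : ZMod (2*m)) + i - ((m : ZMod (2*m)) - j) = (i : ZMod (2*m)) + j from by ring,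
        show (m : ZMod (2*m)) + i - ((m : ZMod (2*m)) + j) = (i : ZMod (2*m)) - j from by ring,
        show (m : ZMod (2*m)) + i - -(j : ZMod (2*m)) =
          (m : ZMod (2*m)) + ((i : ZMod (2*m)) + j) from by ring,
        show -(i : ZMod (2*m)) - j = -((i : ZMod (2*m)) + j) from by ring,
        show -(i : ZMod (2*m)) - ((m : ZMod (2*m)) - j) =
          (m : ZMod (2*m)) - ((i : ZMod (2*m)) - j) from by linear_combination -hmm,
        show -(i : ZMod (2*m)) - ((m : ZMod (2*m)) + j) =
          (m : ZMod (2*m)) - ((i : ZMod (2*m)) + j) from by linear_combination -hmm,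
        show -(i : ZMod (2*m)) - -(j : ZMod (2*m)) = -((i : ZMod (2*m)) - j) from by ring]
    rw [two_nsmul, two_nsmul]
    simp only [← Multiset.singleton_add, ← Multiset.cons_coe, Multiset.coe_nil]
    abel
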